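/- Every open subset U of a complete topologized semilattice X satisfying U = ↑U is Scott-open. -/

import Mathlib

open Set TopologicalSpace

variable (X : Type*)

/-- The weak• topology `𝒵_X` of a topologized semilattice: generated by the subbase of
complements of closed subsemilattices. -/
def zarTop [SemilatticeInf X] [TopologicalSpace X] : TopologicalSpace X :=
  TopologicalSpace.generateFrom
    {U : Set X | ∃ S : Set X, IsClosed S ∧ (∀ a ∈ S, ∀ b ∈ S, a ⊓ b ∈ S) ∧ U = Sᶜ}

/-- The weak° topology `η_X` of a topologized semilattice: generated by the base of
open subsemilattices. -/
def etaTop [SemilatticeInf X] [TopologicalSpace X] : TopologicalSpace X :=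
  TopologicalSpace.generateFrom
    {U : Set X | IsOpen U ∧ ∀ a ∈ U, ∀ b ∈ U, a ⊓ b ∈ U}

/-- The `𝕀`-weak topology `𝒲_X`: generated by the subbase of preimages of open subsets of
`[0,1]` under continuous homomorphisms `h : X → ([0,1], min)`. -/
def iweakTop [SemilatticeInf X] [TopologicalSpace X] : TopologicalSpace X :=
  TopologicalSpace.generateFrom
    {V : Set X | ∃ h : X → unitInterval, Continuous h ∧
      (∀ x y : X, h (x ⊓ y) = min (h x) (h y)) ∧
      ∃ U : Set unitInterval, IsOpen U ∧ V = h ⁻¹' U}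

/-- `U` is Scott-open: `U = ↑U` and every nonempty up-directed set whose supremum lies in
`U` meets `U`. -/
def ScottOpen [Preorder X] (U : Set X) : Prop :=
  IsUpperSet U ∧ ∀ D : Set X, D.Nonempty → DirectedOn (· ≤ ·) D →
    ∀ a : X, IsLUB D a → a ∈ U → (D ∩ U).Nonempty

/-- The Lawson topology `Λ_X`: generated by the subbase consisting of Scott-open sets and
complements of upper sets `↑x`. -/
def lawsonTop [Preorder X] : TopologicalSpace X :=
  TopologicalSpace.generateFrom
    ({U : Set X | ScottOpen X U} ∪ {V : Set X | ∃ x : X, V = (Set.Ici x)ᶜ})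

/-- The interval topology: generated by the subbase of complements of the sets `↑x`, `↓x`. -/
def intervalTop [Preorder X] : TopologicalSpace X :=
  TopologicalSpace.generateFrom
    ({V : Set X | ∃ x : X, V = (Set.Ici x)ᶜ} ∪ {V : Set X | ∃ x : X, V = (Set.Iic x)ᶜ})

/-- A topologized semilattice is complete if every nonempty chain `C` has an infimum and a
supremum in `X`, both belonging to the closure of `C`. -/
def CompleteTS [SemilatticeInf X] [TopologicalSpace X] : Prop :=
  ∀ C : Set X, C.Nonempty → IsChain (· ≤ ·) C →
    (∃ a : X, IsGLB C a ∧ a ∈ closure C) ∧ (∃ b : X, IsLUB C b ∧ b ∈ closure C)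

section Aux
open Cardinal Ordinal
universe u
variable {α : Type u} [PartialOrder α]

/-- iterated closure under a binary operation -/
private def clA (f : α → α → α) (S : Set α) : ℕ → Set α
  | 0 => S
  | n + 1 => clA f S n ∪ Set.image2 f (clA f S n) (clA f S n)

private def clo (f : α → α → α) (S : Set α) : Set α := ⋃ n, clA f S n

private lemma clA_mono_succ (f : α → α → α) (S : Set α) (n : ℕ) :
    clA f S n ⊆ clA f S (n + 1) := Set.subset_union_left

private lemma clA_mono (f : α → α → α) (S : Set α) {n m : ℕ} (h : n ≤ m) :
    clA f S n ⊆ clA f S m := by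
  induction m with
  | zero => simp_all
  | succ m ih =>
    rcases Nat.lt_or_ge n (m+1) with h' | h'
    · exact (ih (Nat.lt_succ_iff.mp h')).trans (clA_mono_succ f S m)
    · have : n = m + 1 := le_antisymm h h'
      subst this; rfl

private lemma subset_clo (f : α → α → α) (S : Set α) : S ⊆ clo f S :=
  Set.subset_iUnion (clA f S) 0

private lemma clA_subset {f : α → α → α} {S D : Set α} (hSD : S ⊆ D)
    (hf : ∀ x ∈ D, ∀ y ∈ D, f x y ∈ D) : ∀ n, clA f S n ⊆ D
  | 0 => hSD
  | n + 1 => by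
    refine Set.union_subset (clA_subset hSD hf n) ?_
    rintro z ⟨x, hx, y, hy, rfl⟩
    exact hf x (clA_subset hSD hf n hx) y (clA_subset hSD hf n hy)

private lemma clo_subset {f : α → α → α} {S D : Set α} (hSD : S ⊆ D)
    (hf : ∀ x ∈ D, ∀ y ∈ D, f x y ∈ D) : clo f S ⊆ D :=
  Set.iUnion_subset (clA_subset hSD hf)

private lemma clA_mono_set (f : α → α → α) {S T : Set α} (h : S ⊆ T) :
    ∀ n, clA f S n ⊆ clA f T n
  | 0 => h
  | n + 1 => Set.union_subset_union (clA_mono_set f h n)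
      (Set.image2_subset (clA_mono_set f h n) (clA_mono_set f h n))

private lemma clo_mono (f : α → α → α) {S T : Set α} (h : S ⊆ T) :
    clo f S ⊆ clo f T :=
  Set.iUnion_subset fun n => (clA_mono_set f h n).trans (Set.subset_iUnion _ n)

private lemma clo_directed {f : α → α → α} {S D : Set α} (hSD : S ⊆ D)
    (hf : ∀ x ∈ D, ∀ y ∈ D, f x y ∈ D ∧ x ≤ f x y ∧ y ≤ f x y) :
    DirectedOn (· ≤ ·) (clo f S) := by
  intro x hx y hy
  obtain ⟨n, hn⟩ := Set.mem_iUnion.mp hx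
  obtain ⟨m, hm⟩ := Set.mem_iUnion.mp hy
  have hxn : x ∈ clA f S (max n m) := clA_mono f S (le_max_left n m) hn
  have hym : y ∈ clA f S (max n m) := clA_mono f S (le_max_right n m) hm
  have hfD : ∀ x ∈ D, ∀ y ∈ D, f x y ∈ D := fun a ha b hb => (hf a ha b hb).1
  have hxD : x ∈ D := clA_subset hSD hfD _ hxn
  have hyD : y ∈ D := clA_subset hSD hfD _ hym
  refine ⟨f x y, Set.mem_iUnion.mpr ⟨max n m + 1, Set.mem_union_right _ ?_⟩,
    (hf x hxD y hyD).2.1, (hf x hxD y hyD).2.2⟩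
  exact Set.mem_image2_of_mem hxn hym

private lemma clo_card (f : α → α → α) (S : Set α) :
    #(clo f S) ≤ #S + ℵ₀ := by
  have h0 : ℵ₀ ≤ #S + ℵ₀ := le_add_self
  have hA : ∀ n, #(clA f S n) ≤ #S + ℵ₀ := by
    intro n
    induction n with
    | zero => exact self_le_add_right _ _
    | succ n ih =>
      calc #(clA f S (n+1)) ≤ #(clA f S n) + #(Set.image2 f (clA f S n) (clA f S n)) :=
            mk_union_le _ _
        _ ≤ (#S + ℵ₀) + (#S + ℵ₀) * (#S + ℵ₀) := by
            gcongr
            exact mk_image2_le.trans (by gcongr)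
        _ = (#S + ℵ₀) + (#S + ℵ₀) := by rw [mul_eq_self h0]
        _ = #S + ℵ₀ := add_eq_self h0
  calc #(clo f S) = lift.{0} #(clo f S) := (Cardinal.lift_uzero _).symm
    _ ≤ lift.{u} #ℕ * ⨆ n, lift.{0} #(clA f S n) := mk_iUnion_le_lift _
    _ ≤ ℵ₀ * (#S + ℵ₀) := by
        rw [mk_nat, lift_aleph0]
        gcongr
        exact ciSup_le' fun n => by rw [Cardinal.lift_uzero]; exact hA n
    _ = #S + ℵ₀ := by
        rw [mul_eq_max le_rfl h0, max_eq_right h0]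

open Classical in
private noncomputable def ubf (D : Set α) : α → α → α := fun x y =>
  if h : ∃ z ∈ D, x ≤ z ∧ y ≤ z then h.choose else x

private lemma ubf_spec {D : Set α} (hdir : DirectedOn (· ≤ ·) D) {x y : α}
    (hx : x ∈ D) (hy : y ∈ D) : ubf D x y ∈ D ∧ x ≤ ubf D x y ∧ y ≤ ubf D x y := by
  have h : ∃ z ∈ D, x ≤ z ∧ y ≤ z := hdir x hx y hy
  unfold ubf
  rw [dif_pos h]
  exact ⟨h.choose_spec.1, h.choose_spec.2.1, h.choose_spec.2.2⟩

private lemma markowsky {F : Set α}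
    (hF : ∀ C : Set α, C ⊆ F → C.Nonempty → IsChain (· ≤ ·) C → ∃ b ∈ F, IsLUB C b) :
    ∀ (κ : Cardinal.{u}) (D : Set α), #D ≤ κ → D ⊆ F → D.Nonempty →
      DirectedOn (· ≤ ·) D → ∃ b ∈ F, IsLUB D b := by
  intro κ
  refine Cardinal.lt_wf.induction
    (C := fun κ => ∀ D : Set α, #D ≤ κ → D ⊆ F → D.Nonempty →
      DirectedOn (· ≤ ·) D → ∃ b ∈ F, IsLUB D b) κ ?_
  clear κ
  intro κ IH D hcard hDF hne hdir
  by_cases hcnt : D.Countable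
  · by_cases hfin : D.Finite
    · -- finite case: maximal element is greatest
      obtain ⟨m, hm, hmax⟩ := Set.Finite.exists_maximalFor id D hfin hne
      have hub : ∀ d ∈ D, d ≤ m := by
        intro d hd
        obtain ⟨z, hz, hmz, hdz⟩ := hdir m hm d hd
        exact hdz.trans (hmax hz hmz)
      exact ⟨m, hDF hm, hub, fun u hu => hu hm⟩
    · -- countably infinite: cofinal increasing sequence
      obtain ⟨g, hg⟩ := hcnt.exists_eq_range hne
      have hgD : ∀ n, g n ∈ D := fun n => hg ▸ Set.mem_range_self n
      let c : ℕ → α := fun n => Nat.rec (g 0) (fun n cn => ubf D cn (g (n + 1))) n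
      have hcD : ∀ n, c n ∈ D := by
        intro n
        induction n with
        | zero => exact hgD 0
        | succ n ihn => exact (ubf_spec hdir ihn (hgD (n + 1))).1
      have hstep : ∀ n, c n ≤ c (n + 1) :=
        fun n => (ubf_spec hdir (hcD n) (hgD (n + 1))).2.1
      have hmono : Monotone c := monotone_nat_of_le_succ hstep
      have hgc : ∀ n, g n ≤ c n := by
        intro n
        cases n with
        | zero => exact le_rfl
        | succ n => exact (ubf_spec hdir (hcD n) (hgD (n + 1))).2.2
      have hchain : IsChain (· ≤ ·) (Set.range c) := by
        rintro x ⟨n, rfl⟩ y ⟨m, rfl⟩ -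
        rcases le_total n m with h | h
        · exact Or.inl (hmono h)
        · exact Or.inr (hmono h)
      obtain ⟨b, hbF, hbC⟩ := hF (Set.range c)
        (fun x ⟨n, hn⟩ => hn ▸ hDF (hcD n)) ⟨c 0, Set.mem_range_self 0⟩ hchain
      refine ⟨b, hbF, fun d hd => ?_, fun u hu => ?_⟩
      · obtain ⟨n, rfl⟩ := hg ▸ hd
        exact (hgc n).trans (hbC.1 (Set.mem_range_self n))
      · exact hbC.2 fun x ⟨n, hn⟩ => hn ▸ hu (hcD n)
  · -- uncountable case: Iwamura decomposition
    have hκ0 : ℵ₀ < #D := by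
      rw [← not_le, Cardinal.mk_le_aleph0_iff, Set.countable_coe_iff]
      exact hcnt
    obtain ⟨r, wo, hr⟩ := Cardinal.ord_eq ↥D
    haveI := wo
    set f := ubf D with hf
    have hfD : ∀ x ∈ D, ∀ y ∈ D, f x y ∈ D := fun x hx y hy => (ubf_spec hdir hx hy).1
    set Si : ↥D → Set α := fun i => (↑) '' {j : ↥D | r j i} ∪ {(i : α)} with hSi
    set Di : ↥D → Set α := fun i => clo f (Si i) with hDi
    have hSD : ∀ i, Si i ⊆ D := by
      rintro i x (⟨k, -, rfl⟩ | rfl)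
      · exact k.2
      · exact i.2
    have hDiD : ∀ i, Di i ⊆ D := fun i => clo_subset (hSD i) hfD
    have hDidir : ∀ i, DirectedOn (· ≤ ·) (Di i) :=
      fun i => clo_directed (hSD i) (fun x hx y hy => ubf_spec hdir hx hy)
    have hDine : ∀ i, (Di i).Nonempty :=
      fun i => ⟨i, subset_clo _ _ (Set.mem_union_right _ rfl)⟩
    have hDicard : ∀ i, #(Di i) < #D := by
      intro i
      have h1 : #(Di i) ≤ #(Si i) + ℵ₀ := clo_card f (Si i)
      have h2 : #(Si i) ≤ #{j : ↥D | r j i} + 1 := by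
        refine (mk_union_le _ _).trans ?_
        gcongr
        · exact mk_image_le
        · exact (mk_singleton _).le
      have h3 : #{j : ↥D | r j i} < #D := by
        have := Cardinal.card_typein_lt (r := r) i hr
        rwa [Ordinal.card_typein] at this
      refine h1.trans_lt (Cardinal.add_lt_of_lt hκ0.le ?_ hκ0)
      exact h2.trans_lt (Cardinal.add_lt_of_lt hκ0.le h3 (one_lt_aleph0.trans hκ0))
    have hex : ∀ i, ∃ b ∈ F, IsLUB (Di i) b := fun i =>
      IH (#(Di i)) ((hDicard i).trans_le hcard) (Di i) le_rfl
        ((hDiD i).trans hDF) (hDine i) (hDidir i)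
    choose s hsF hsLUB using hex
    have hmono : ∀ i j, r i j → Di i ⊆ Di j := by
      intro i j hij
      refine clo_mono f ?_
      rintro x (⟨k, hk, rfl⟩ | rfl)
      · exact Set.mem_union_left _ ⟨k, _root_.trans hk hij, rfl⟩
      · exact Set.mem_union_left _ ⟨i, hij, rfl⟩
    have hsmono : ∀ i j, r i j → s i ≤ s j :=
      fun i j hij => (hsLUB i).2 fun x hx => (hsLUB j).1 (hmono i j hij hx)
    have hchain : IsChain (· ≤ ·) (Set.range s) := by
      rintro x ⟨i, rfl⟩ y ⟨j, rfl⟩ -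
      rcases trichotomous_of r i j with h | h | h
      · exact Or.inl (hsmono i j h)
      · exact Or.inl (h ▸ le_rfl)
      · exact Or.inr (hsmono j i h)
    haveI : Nonempty ↥D := hne.to_subtype
    obtain ⟨b, hbF, hbC⟩ := hF (Set.range s)
      (fun x ⟨i, hi⟩ => hi ▸ hsF i) (Set.range_nonempty s) hchain
    refine ⟨b, hbF, fun d hd => ?_, fun u hu => ?_⟩
    · have : d ∈ Di ⟨d, hd⟩ := subset_clo _ _ (Set.mem_union_right _ rfl)
      exact ((hsLUB ⟨d, hd⟩).1 this).trans (hbC.1 (Set.mem_range_self _))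
    · refine hbC.2 fun x ⟨i, hi⟩ => hi ▸ (hsLUB i).2 fun y hy => hu (hDiD i hy)

end Aux

/-- Every open subset `U` of a complete topologized semilattice `X`
satisfying `U = ↑U` is Scott-open. -/
theorem stmt10 {X : Type*} [SemilatticeInf X] [TopologicalSpace X]
    (hcomp : CompleteTS X) (U : Set X) (hU : IsOpen U) (hup : IsUpperSet U) :
    ScottOpen X U := by
  refine ⟨hup, fun D hne hdir a ha haU => ?_⟩
  by_contra hcon
  rw [Set.not_nonempty_iff_eq_empty] at hcon
  have hDF : D ⊆ Uᶜ := fun d hd hdU =>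
    Set.eq_empty_iff_forall_notMem.mp hcon d ⟨hd, hdU⟩
  have hF : ∀ C : Set X, C ⊆ Uᶜ → C.Nonempty → IsChain (· ≤ ·) C →
      ∃ b ∈ Uᶜ, IsLUB C b := by
    intro C hCF hCne hCch
    obtain ⟨-, b, hb, hbc⟩ := hcomp C hCne hCch
    exact ⟨b, hU.isClosed_compl.closure_subset (closure_mono hCF hbc), hb⟩
  obtain ⟨b, hbF, hbLUB⟩ := markowsky hF (Cardinal.mk D) D le_rfl hDF hne hdir
  exact hbF (ha.unique hbLUB ▸ haU)
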